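/- Let y_m > 0, λ > 0, and let f : ℝ → ℝ be continuous and strictly positive on [0, y_m]. Suppose y : [0,1] → ℝ is twice continuously differentiable with −y''(x) = λ f(y(x)) on [0,1], y'(0) = 0, y(1) = 0, y(0) = y_m, and y(x) ≥ 0 on [0,1]. Set F(y) = ∫₀^y f(s) ds and h(s) = F(y_m) − F(s). Then λ = (1/2)·(∫₀^{y_m} h(s)^{-1/2} ds)². -/

import Mathlib

open MeasureTheory intervalIntegral Set

/-- Remark after Theorem 1 (equation (2.7)): for the principal solution
`(λ, y)` of `−y'' = λ f(y)`, `y'(0) = 0`, `y(1) = 0`, `y(0) = y_m`, the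
eigenvalue is given exactly by the quadrature
`λ = (1/2)(∫₀^{y_m} h^{-1/2})²`. -/
theorem stmt_3 (y_m lam : ℝ) (hym : 0 < y_m) (hlam : 0 < lam)
    (f : ℝ → ℝ)
    (hf_cont : ContinuousOn f (Set.Icc 0 y_m))
    (hf_pos : ∀ s ∈ Set.Icc 0 y_m, 0 < f s)
    (y y' y'' : ℝ → ℝ)
    (hy' : ∀ x ∈ Set.Icc (0:ℝ) 1, HasDerivAt y (y' x) x)
    (hy'' : ∀ x ∈ Set.Icc (0:ℝ) 1, HasDerivAt y' (y'' x) x)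
    (hy''_cont : ContinuousOn y'' (Set.Icc 0 1))
    (hode : ∀ x ∈ Set.Icc (0:ℝ) 1, -y'' x = lam * f (y x))
    (hbc0 : y' 0 = 0) (hbc1 : y 1 = 0) (hinit : y 0 = y_m)
    (hpos : ∀ x ∈ Set.Icc (0:ℝ) 1, 0 ≤ y x)
    (F h : ℝ → ℝ)
    (hF : ∀ s, F s = ∫ r in (0:ℝ)..s, f r)
    (hh : ∀ s, h s = F y_m - F s) :
    lam = (1/2) * (∫ s in (0:ℝ)..y_m, (h s) ^ (-(1/2) : ℝ)) ^ 2 := by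
  have h01 : (0:ℝ) ∈ Icc (0:ℝ) 1 := ⟨le_refl _, zero_le_one⟩
  have h11 : (1:ℝ) ∈ Icc (0:ℝ) 1 := ⟨zero_le_one, le_refl _⟩
  -- clamp map into [0, y_m]
  set φ : ℝ → ℝ := fun s => max 0 (min s y_m) with hφdef
  have hφ_mem : ∀ s, φ s ∈ Icc 0 y_m :=
    fun s => ⟨le_max_left _ _, max_le hym.le (min_le_right _ _)⟩
  have hφ_cont : Continuous φ := continuous_const.max (continuous_id.min continuous_const)
  have hφ_eq : ∀ s ∈ Icc 0 y_m, φ s = s := by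
    intro s hs
    simp only [hφdef, min_eq_left hs.2, max_eq_right hs.1]
  -- extended f
  set ft : ℝ → ℝ := fun s => f (φ s) with hftdef
  have hft_cont : Continuous ft := hf_cont.comp_continuous hφ_cont hφ_mem
  have hft_eq : ∀ s ∈ Icc 0 y_m, ft s = f s := by
    intro s hs; simp only [hftdef, hφ_eq s hs]
  -- positive lower bound m
  obtain ⟨s₀, hs₀, hmin⟩ := (isCompact_Icc (a := (0:ℝ)) (b := y_m)).exists_isMinOn
    (nonempty_Icc.2 hym.le) hf_cont
  set m : ℝ := f s₀ with hmdef
  have hm : 0 < m := hf_pos s₀ hs₀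
  have hft_ge : ∀ s, m ≤ ft s := fun s => hmin (hφ_mem s)
  have hft_pos : ∀ s, 0 < ft s := fun s => lt_of_lt_of_le hm (hft_ge s)
  -- primitive of ft
  set Ft : ℝ → ℝ := fun s => ∫ r in (0:ℝ)..s, ft r with hFtdef
  have hFt_deriv : ∀ s, HasDerivAt Ft (ft s) s := by
    intro s
    exact intervalIntegral.integral_hasDerivAt_right
      (hft_cont.intervalIntegrable _ _)
      (hft_cont.stronglyMeasurableAtFilter _ _)
      hft_cont.continuousAt
  have hFt_cont : Continuous Ft :=
    continuous_iff_continuousAt.2 fun s => (hFt_deriv s).continuousAt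
  have hF_eq : ∀ s ∈ Icc 0 y_m, F s = Ft s := by
    intro s hs
    rw [hF s, hFtdef]
    refine intervalIntegral.integral_congr fun r hr => ?_
    rw [uIcc_of_le hs.1] at hr
    exact (hft_eq r ⟨hr.1, le_trans hr.2 hs.2⟩).symm
  -- shifted primitive
  set ht : ℝ → ℝ := fun s => Ft y_m - Ft s with hhtdef
  have hht_cont : Continuous ht := continuous_const.sub hFt_cont
  have hht_int : ∀ s, ht s = ∫ r in s..y_m, ft r := by
    intro s
    exact intervalIntegral.integral_interval_sub_left
      (hft_cont.intervalIntegrable _ _) (hft_cont.intervalIntegrable _ _)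
  have hht_lb : ∀ s, s ≤ y_m → m * (y_m - s) ≤ ht s := by
    intro s hs
    rw [hht_int s]
    have : (∫ _ in s..y_m, m) ≤ ∫ r in s..y_m, ft r :=
      intervalIntegral.integral_mono_on hs (intervalIntegrable_const)
        (hft_cont.intervalIntegrable _ _) (fun x _ => hft_ge x)
    simpa [intervalIntegral.integral_const, smul_eq_mul, mul_comm] using this
  have hh_eq : ∀ s ∈ Icc 0 y_m, h s = ht s := by
    intro s hs
    rw [hh s, hhtdef, hF_eq s hs, hF_eq y_m ⟨hym.le, le_refl _⟩]
  -- continuity of y, y'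
  have hy_cont : ContinuousOn y (Icc 0 1) :=
    fun x hx => (hy' x hx).continuousAt.continuousWithinAt
  have hy'_cont : ContinuousOn y' (Icc 0 1) :=
    fun x hx => (hy'' x hx).continuousAt.continuousWithinAt
  have hode' : ∀ x ∈ Icc (0:ℝ) 1, y'' x = -(lam * f (y x)) := by
    intro x hx; have := hode x hx; linarith
  -- upper bound y ≤ y_m
  have hub : ∀ x ∈ Icc (0:ℝ) 1, y x ≤ y_m := by
    by_contra hcon
    push_neg at hcon
    obtain ⟨x₀, hx₀, hx₀'⟩ := hcon
    set A : Set ℝ := {x | x ∈ Icc (0:ℝ) 1 ∧ y_m < y x} with hAdef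
    have hA_ne : A.Nonempty := ⟨x₀, hx₀, hx₀'⟩
    have hA_sub : A ⊆ Icc 0 1 := fun a ha => ha.1
    have hA_bdd : BddBelow A := ⟨0, fun a ha => ha.1.1⟩
    set cc : ℝ := sInf A with hccdef
    have hcc_le : ∀ a ∈ A, cc ≤ a := fun a ha => csInf_le hA_bdd ha
    have hcc_mem : cc ∈ Icc (0:ℝ) 1 :=
      ⟨le_csInf hA_ne (fun a ha => ha.1.1), le_trans (hcc_le x₀ ⟨hx₀, hx₀'⟩) hx₀.2⟩
    -- a right neighborhood of 0 where y < y_m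
    have hδ : ∃ δ : ℝ, 0 < δ ∧ δ ≤ 1 ∧ ∀ t ∈ Ioc (0:ℝ) δ, y t < y_m := by
      have h0'' : y'' 0 < 0 := by
        rw [hode' 0 h01, hinit]
        have := hf_pos y_m ⟨hym.le, le_refl _⟩
        nlinarith
      have hev : y'' ⁻¹' (Iio 0) ∈ nhdsWithin 0 (Icc (0:ℝ) 1) :=
        (hy''_cont 0 h01) (Iio_mem_nhds h0'')
      rw [mem_nhdsWithin] at hev
      obtain ⟨U, hU_open, hU0, hUsub⟩ := hev
      obtain ⟨ε, hε, hball⟩ := Metric.isOpen_iff.1 hU_open 0 hU0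
      refine ⟨min (ε/2) 1, lt_min (half_pos hε) one_pos, min_le_right _ _, ?_⟩
      set δ : ℝ := min (ε/2) 1 with hδdef
      have hδpos : 0 < δ := lt_min (half_pos hε) one_pos
      have hδ1 : δ ≤ 1 := min_le_right _ _
      have hsub : Icc (0:ℝ) δ ⊆ Icc (0:ℝ) 1 := Icc_subset_Icc le_rfl hδ1
      have hneg : ∀ t ∈ Icc (0:ℝ) δ, y'' t < 0 := by
        intro t ht'
        refine hUsub ⟨hball ?_, hsub ht'⟩
        rw [Metric.mem_ball, Real.dist_eq, sub_zero, abs_of_nonneg ht'.1]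
        exact lt_of_le_of_lt ht'.2 (lt_of_le_of_lt (min_le_left _ _) (by linarith))
      have hy'a : StrictAntiOn y' (Icc (0:ℝ) δ) := by
        refine strictAntiOn_of_deriv_neg (convex_Icc _ _) (hy'_cont.mono hsub) ?_
        intro t ht'
        rw [interior_Icc] at ht'
        rw [(hy'' t (hsub ⟨ht'.1.le, ht'.2.le⟩)).deriv]
        exact hneg t ⟨ht'.1.le, ht'.2.le⟩
      have hy'negd : ∀ t ∈ Ioc (0:ℝ) δ, y' t < 0 := by
        intro t ht'
        have := hy'a ⟨le_refl _, hδpos.le⟩ ⟨ht'.1.le, ht'.2⟩ ht'.1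
        rwa [hbc0] at this
      have hya : StrictAntiOn y (Icc (0:ℝ) δ) := by
        refine strictAntiOn_of_deriv_neg (convex_Icc _ _) (hy_cont.mono hsub) ?_
        intro t ht'
        rw [interior_Icc] at ht'
        rw [(hy' t (hsub ⟨ht'.1.le, ht'.2.le⟩)).deriv]
        exact hy'negd t ⟨ht'.1, ht'.2.le⟩
      intro t ht'
      have := hya ⟨le_refl _, hδpos.le⟩ ⟨ht'.1.le, ht'.2⟩ ht'.1
      rwa [hinit] at this
    obtain ⟨δ, hδpos, hδ1, hδprop⟩ := hδ
    have hδ_lb : ∀ a ∈ A, δ ≤ a := by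
      intro a ha
      by_contra hle
      push_neg at hle
      have ha0 : 0 < a := by
        rcases lt_or_eq_of_le ha.1.1 with h' | h'
        · exact h'
        · exfalso
          have := ha.2
          rw [← h', hinit] at this
          exact lt_irrefl _ this
      exact absurd ha.2 (not_lt.2 (hδprop a ⟨ha0, hle.le⟩).le)
    have hcc_pos : 0 < cc := lt_of_lt_of_le hδpos (le_csInf hA_ne hδ_lb)
    have hIco : ∀ t ∈ Ico (0:ℝ) cc, y t ≤ y_m := by
      intro t ht'
      by_contra hgt
      push_neg at hgt
      have : t ∈ A := ⟨⟨ht'.1, le_trans ht'.2.le hcc_mem.2⟩, hgt⟩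
      exact absurd (hcc_le t this) (not_le.2 ht'.2)
    have hsubc : Icc (0:ℝ) cc ⊆ Icc (0:ℝ) 1 := Icc_subset_Icc le_rfl hcc_mem.2
    have hy'a : StrictAntiOn y' (Icc (0:ℝ) cc) := by
      refine strictAntiOn_of_deriv_neg (convex_Icc _ _) (hy'_cont.mono hsubc) ?_
      intro t ht'
      rw [interior_Icc] at ht'
      have htI : t ∈ Icc (0:ℝ) 1 := hsubc ⟨ht'.1.le, ht'.2.le⟩
      rw [(hy'' t htI).deriv, hode' t htI]
      have hyt : y t ∈ Icc 0 y_m := ⟨hpos t htI, hIco t ⟨ht'.1.le, ht'.2⟩⟩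
      have := hf_pos _ hyt
      nlinarith
    have hy'negc : ∀ t ∈ Ioc (0:ℝ) cc, y' t < 0 := by
      intro t ht'
      have := hy'a ⟨le_refl _, hcc_pos.le⟩ ⟨ht'.1.le, ht'.2⟩ ht'.1
      rwa [hbc0] at this
    have hya : StrictAntiOn y (Icc (0:ℝ) cc) := by
      refine strictAntiOn_of_deriv_neg (convex_Icc _ _) (hy_cont.mono hsubc) ?_
      intro t ht'
      rw [interior_Icc] at ht'
      rw [(hy' t (hsubc ⟨ht'.1.le, ht'.2.le⟩)).deriv]
      exact hy'negc t ⟨ht'.1, ht'.2.le⟩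
    have hlt : y cc < y_m := by
      have := hya ⟨le_refl _, hcc_pos.le⟩ ⟨hcc_pos.le, le_refl _⟩ hcc_pos
      rwa [hinit] at this
    have hclos : cc ∈ closure A := csInf_mem_closure hA_ne hA_bdd
    have hge : y_m ≤ y cc := by
      have hcw : ContinuousWithinAt y A cc := (hy_cont cc hcc_mem).mono hA_sub
      haveI : (nhdsWithin cc A).NeBot := mem_closure_iff_nhdsWithin_neBot.1 hclos
      exact ge_of_tendsto hcw (eventually_nhdsWithin_of_forall fun a ha => ha.2.le)
    linarith
  have hymem : ∀ x ∈ Icc (0:ℝ) 1, y x ∈ Icc 0 y_m :=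
    fun x hx => ⟨hpos x hx, hub x hx⟩
  have hy''_neg : ∀ x ∈ Icc (0:ℝ) 1, y'' x < 0 := by
    intro x hx
    rw [hode' x hx]
    have := hf_pos (y x) (hymem x hx)
    nlinarith
  -- y' < 0 on (0, 1]
  have hy'_anti : StrictAntiOn y' (Icc (0:ℝ) 1) := by
    refine strictAntiOn_of_deriv_neg (convex_Icc _ _) hy'_cont ?_
    intro x hx
    rw [interior_Icc] at hx
    rw [(hy'' x ⟨hx.1.le, hx.2.le⟩).deriv]
    exact hy''_neg x ⟨hx.1.le, hx.2.le⟩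
  have hy'_neg : ∀ x ∈ Ioc (0:ℝ) 1, y' x < 0 := by
    intro x hx
    have := hy'_anti h01 ⟨hx.1.le, hx.2⟩ hx.1
    rwa [hbc0] at this
  -- energy identity
  have energy : ∀ x ∈ Icc (0:ℝ) 1, (y' x)^2 = 2 * lam * ht (y x) := by
    set E : ℝ → ℝ := fun t => (1/2) * (y' t)^2 + lam * Ft (y t) with hEdef
    have hE_deriv : ∀ x ∈ Icc (0:ℝ) 1, HasDerivAt E 0 x := by
      intro x hx
      have h1 : HasDerivAt (fun t => (y' t)^2) ((2:ℕ) * y' x ^ 1 * y'' x) x := (hy'' x hx).pow 2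
      have h2 : HasDerivAt (fun t => Ft (y t)) (ft (y x) * y' x) x :=
        (hFt_deriv (y x)).comp x (hy' x hx)
      have h3 := (h1.const_mul (1/2:ℝ)).add (h2.const_mul lam)
      refine h3.congr_deriv ?_
      rw [hode' x hx, hft_eq (y x) (hymem x hx)]
      push_cast
      ring
    have hE_cont : ContinuousOn E (Icc 0 1) :=
      fun x hx => (hE_deriv x hx).continuousAt.continuousWithinAt
    have hE_const : ∀ x ∈ Icc (0:ℝ) 1, E x = E 0 :=
      constant_of_has_deriv_right_zero hE_cont
        (fun t ht' => (hE_deriv t (Ico_subset_Icc_self ht')).hasDerivWithinAt)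
    intro x hx
    have hEx := hE_const x hx
    rw [hEdef] at hEx
    simp only [hbc0, hinit] at hEx
    show (y' x)^2 = 2 * lam * (Ft y_m - Ft (y x))
    nlinarith [hEx]
  -- the substituted integrand is constant
  set c : ℝ := Real.sqrt (2 * lam) with hcdef
  set g : ℝ → ℝ := fun s => (ht s) ^ (-(1/2) : ℝ) with hgdef
  have hconst : ∀ x ∈ Ioc (0:ℝ) 1, y' x * g (y x) = -c := by
    intro x hx
    have hxI : x ∈ Icc (0:ℝ) 1 := ⟨hx.1.le, hx.2⟩
    have hy'x : y' x < 0 := hy'_neg x hx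
    have hE := energy x hxI
    have htpos : 0 < ht (y x) := by nlinarith
    have hsq : y' x = -Real.sqrt ((y' x)^2) := by
      rw [Real.sqrt_sq_eq_abs, abs_of_neg hy'x, neg_neg]
    rw [hgdef]
    simp only
    rw [hsq, hE, Real.sqrt_mul (by positivity : (0:ℝ) ≤ 2 * lam),
      Real.sqrt_eq_rpow (ht (y x))]
    rw [neg_mul, mul_assoc, ← Real.rpow_add htpos, hcdef,
      Real.sqrt_mul (by norm_num : (0:ℝ) ≤ 2)]
    norm_num
  -- integrability of g on [0, y_m]
  have hg_int : IntegrableOn g (Icc 0 y_m) := by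
    set B : ℝ → ℝ := fun s => m ^ (-(1/2) : ℝ) * (y_m - s) ^ (-(1/2) : ℝ) with hBdef
    have hB_int : IntegrableOn B (Icc 0 y_m) := by
      have h1 : IntervalIntegrable (fun s : ℝ => s ^ (-(1/2) : ℝ)) volume y_m 0 :=
        intervalIntegrable_rpow' (by norm_num)
      have h2 := (h1.comp_sub_left y_m).const_mul (m ^ (-(1/2) : ℝ))
      rw [sub_self, sub_zero] at h2
      exact (integrableOn_Icc_iff_integrableOn_Ioc (by simp)).2 h2.1
    have hmeas : AEStronglyMeasurable g (volume.restrict (Icc 0 y_m)) :=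
      ((hht_cont.measurable).pow_const (-(1/2) : ℝ)).aestronglyMeasurable
    refine Integrable.mono' hB_int hmeas ?_
    refine (ae_restrict_iff' measurableSet_Icc).2 (Filter.Eventually.of_forall fun s hs => ?_)
    have hmul_nonneg : (0:ℝ) ≤ m * (y_m - s) := by nlinarith [hs.2, hm]
    have hht_nonneg : 0 ≤ ht s := le_trans hmul_nonneg (hht_lb s hs.2)
    have hgnn : (0:ℝ) ≤ g s := Real.rpow_nonneg hht_nonneg _
    rw [Real.norm_eq_abs, abs_of_nonneg hgnn]
    rcases eq_or_lt_of_le hs.2 with heq | hlt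
    · have h1 : ht s = 0 := by rw [hhtdef]; simp [heq]
      have h2 : y_m - s = 0 := by rw [heq]; ring
      rw [hgdef, hBdef]
      simp only [h1, h2, Real.zero_rpow (by norm_num : (-(1/2):ℝ) ≠ 0), mul_zero, le_refl]
    · have h1 : 0 < m * (y_m - s) := by nlinarith
      have h2 : m * (y_m - s) ≤ ht s := hht_lb s hs.2
      calc (ht s) ^ (-(1/2) : ℝ) ≤ (m * (y_m - s)) ^ (-(1/2) : ℝ) :=
            Real.rpow_le_rpow_of_nonpos h1 h2 (by norm_num)
        _ = m ^ (-(1/2) : ℝ) * (y_m - s) ^ (-(1/2) : ℝ) :=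
            Real.mul_rpow hm.le (by linarith)
  -- change of variables
  have himage : y '' Icc (0:ℝ) 1 ⊆ Icc 0 y_m := by
    rintro s ⟨x, hx, rfl⟩; exact hymem x hx
  have key : (∫ x in (0:ℝ)..1, y' x • (g ∘ y) x) = ∫ u in (y 0)..(y 1), g u := by
    have huIcc : Set.uIcc (0:ℝ) 1 = Icc (0:ℝ) 1 := uIcc_of_le zero_le_one
    refine intervalIntegral.integral_comp_smul_deriv''' ?_ ?_ ?_ ?_ ?_
    · rw [huIcc]; exact hy_cont
    · intro x hx
      simp only [min_eq_left (zero_le_one (α := ℝ)), max_eq_right (zero_le_one (α := ℝ))] at hx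
      exact (hy' x ⟨hx.1.le, hx.2.le⟩).hasDerivWithinAt
    · rintro s ⟨x, hx, rfl⟩
      simp only [min_eq_left (zero_le_one (α := ℝ)), max_eq_right (zero_le_one (α := ℝ))] at hx
      have hxI : x ∈ Icc (0:ℝ) 1 := ⟨hx.1.le, hx.2.le⟩
      have htpos : 0 < ht (y x) := by
        have hE := energy x hxI
        have := hy'_neg x ⟨hx.1, hx.2.le⟩
        nlinarith
      exact ((Real.continuousAt_rpow_const _ _ (Or.inl (ne_of_gt htpos))).comp
        hht_cont.continuousAt).continuousWithinAt
    · rw [huIcc]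
      exact hg_int.mono_set himage
    · rw [huIcc]
      have h0 : ∀ᵐ (x : ℝ), x ≠ 0 := by
        refine ae_iff.2 ?_
        simp only [not_not, setOf_eq_eq_singleton]
        exact measure_singleton 0
      have hconst_int : IntegrableOn (fun _ : ℝ => -c) (Icc (0:ℝ) 1) :=
        integrableOn_const (by simp)
      refine hconst_int.congr ?_
      refine (ae_restrict_iff' measurableSet_Icc).2 ?_
      filter_upwards [h0] with x hx0 hxI
      have hxIoc : x ∈ Ioc (0:ℝ) 1 := ⟨lt_of_le_of_ne hxI.1 (Ne.symm hx0), hxI.2⟩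
      have := hconst x hxIoc
      simp only [Function.comp, smul_eq_mul]
      linarith [this]
  have hlhs : (∫ x in (0:ℝ)..1, y' x • (g ∘ y) x) = -c := by
    rw [intervalIntegral.integral_congr_ae
      (g := fun _ => -c) (Filter.Eventually.of_forall fun x hx => ?_)]
    · simp
    · rw [uIoc_of_le (zero_le_one (α := ℝ))] at hx
      simpa [Function.comp, smul_eq_mul] using hconst x hx
  have hrhs : (∫ u in (y 0)..(y 1), g u) = -(∫ s in (0:ℝ)..y_m, g s) := by
    rw [hinit, hbc1, ← intervalIntegral.integral_symm]
  have hIg : (∫ s in (0:ℝ)..y_m, g s) = c := by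
    rw [key, hrhs] at hlhs
    linarith
  have hIeq : (∫ s in (0:ℝ)..y_m, (h s) ^ (-(1/2) : ℝ)) = ∫ s in (0:ℝ)..y_m, g s := by
    refine intervalIntegral.integral_congr fun s hs => ?_
    rw [uIcc_of_le hym.le] at hs
    rw [hgdef]
    simp only
    rw [hh_eq s hs]
  rw [hIeq, hIg, hcdef, Real.sq_sqrt (by positivity : (0:ℝ) ≤ 2 * lam)]
  ring
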